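/- Let a, b, c, d ∈ ℝ² be such that T₁ = conv{a, b, c} and T₂ = conv{a, b, d} are nondegenerate triangles with c and d strictly on opposite sides of the line through a and b (so T₁ and T₂ share the edge [a, b]). Then the segment joining the incenter of T₁ to the incenter of T₂ intersects the open segment between a and b. -/

import Mathlib

lemma aux_strict (s : AffineSubspace ℝ (EuclideanSpace ℝ (Fin 2)))
    (b c d e : EuclideanSpace ℝ (Fin 2))
    (hb : b ∈ s) (he : e ∈ s) (hc : c ∉ s) (hd : d ∉ s) (μ lam : ℝ)
    (hμ : 0 < μ) (hlam : 0 < lam)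
    (hrel : e - b = μ • (c - b) + lam • (d - b)) :
    ‖e - b‖ < μ * ‖c - b‖ + lam * ‖d - b‖ := by
  have hcb : c - b ≠ 0 := sub_ne_zero.2 fun h => hc (h ▸ hb)
  have hdb : d - b ≠ 0 := sub_ne_zero.2 fun h => hd (h ▸ hb)
  have hns : ¬ SameRay ℝ (μ • (c - b)) (lam • (d - b)) := by
    intro hs
    obtain ⟨r₁, r₂, hr₁, hr₂, hr⟩ := hs.exists_pos (smul_ne_zero hμ.ne' hcb)
      (smul_ne_zero hlam.ne' hdb)
    have hne : (r₂ * lam) ≠ 0 := by positivity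
    have hd' : d - b = ((r₁ * μ) / (r₂ * lam)) • (c - b) := by
      have h2 : (r₂ * lam) • (d - b) = (r₁ * μ) • (c - b) := by
        rw [mul_smul, mul_smul, hr]
      rw [div_eq_mul_inv, mul_comm, mul_smul, ← h2, inv_smul_smul₀ hne]
    set k : ℝ := μ + lam * ((r₁ * μ) / (r₂ * lam)) with hk
    have hkpos : 0 < k := by positivity
    have hek : e - b = k • (c - b) := by
      rw [hrel, hd', smul_smul, hk, add_smul]
    have hcs : c ∈ s := by
      have hc' : c = k⁻¹ • (e -ᵥ b) +ᵥ b := by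
        have : k⁻¹ • (e - b) = c - b := by rw [hek, inv_smul_smul₀ hkpos.ne']
        simp only [vsub_eq_sub, vadd_eq_add, this, sub_add_cancel]
      rw [hc']
      exact s.smul_vsub_vadd_mem k⁻¹ he hb hb
    exact hc hcs
  calc ‖e - b‖ = ‖μ • (c - b) + lam • (d - b)‖ := by rw [hrel]
    _ < ‖μ • (c - b)‖ + ‖lam • (d - b)‖ := norm_add_lt_of_not_sameRay hns
    _ = μ * ‖c - b‖ + lam * ‖d - b‖ := by
        rw [norm_smul, norm_smul, Real.norm_of_nonneg hμ.le, Real.norm_of_nonneg hlam.le]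

lemma key_alg (a b c d : EuclideanSpace ℝ (Fin 2)) (la1 lb1 la2 lb2 l μ lam r : ℝ)
    (hs1 : la1 + lb1 + l ≠ 0) (hs2 : la2 + lb2 + l ≠ 0)
    (hD : (la2 + lb2 + l) * lam + (la1 + lb1 + l) * μ ≠ 0)
    (he : μ • c + lam • d = (1 - r) • a + r • b) :
    (1 - (la2 + lb2 + l) * lam / ((la2 + lb2 + l) * lam + (la1 + lb1 + l) * μ)) •
        ((la1 + lb1 + l)⁻¹ • (la1 • a + lb1 • b + l • c)) +
      ((la2 + lb2 + l) * lam / ((la2 + lb2 + l) * lam + (la1 + lb1 + l) * μ)) •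
        ((la2 + lb2 + l)⁻¹ • (la2 • a + lb2 • b + l • d)) =
      ((μ * la1 + lam * la2 + l * (1 - r)) / ((la2 + lb2 + l) * lam + (la1 + lb1 + l) * μ)) • a +
      ((μ * lb1 + lam * lb2 + l * r) / ((la2 + lb2 + l) * lam + (la1 + lb1 + l) * μ)) • b := by
  have h : (1 - (la2 + lb2 + l) * lam / ((la2 + lb2 + l) * lam + (la1 + lb1 + l) * μ)) •
        ((la1 + lb1 + l)⁻¹ • (la1 • a + lb1 • b + l • c)) +
      ((la2 + lb2 + l) * lam / ((la2 + lb2 + l) * lam + (la1 + lb1 + l) * μ)) •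
        ((la2 + lb2 + l)⁻¹ • (la2 • a + lb2 • b + l • d)) -
      (((μ * la1 + lam * la2 + l * (1 - r)) / ((la2 + lb2 + l) * lam + (la1 + lb1 + l) * μ)) • a +
      ((μ * lb1 + lam * lb2 + l * r) / ((la2 + lb2 + l) * lam + (la1 + lb1 + l) * μ)) • b)
      = (l / ((la2 + lb2 + l) * lam + (la1 + lb1 + l) * μ)) •
          ((μ • c + lam • d) - ((1 - r) • a + r • b)) := by
    match_scalars <;> field_simp <;> ring
  rw [he, sub_self, smul_zero, sub_eq_zero] at h
  exact h



/-- The incenter of the triangle with vertices `p`, `q`, `r`: the barycentric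
combination `(ℓ_p p + ℓ_q q + ℓ_r r)/(ℓ_p + ℓ_q + ℓ_r)` where `ℓ_p = ‖q - r‖` is the
length of the edge opposite `p`, etc. -/
noncomputable def incenter (p q r : EuclideanSpace ℝ (Fin 2)) : EuclideanSpace ℝ (Fin 2) :=
  (‖q - r‖ + ‖r - p‖ + ‖p - q‖)⁻¹ • (‖q - r‖ • p + ‖r - p‖ • q + ‖p - q‖ • r)

/-- If `T₁ = conv{a, b, c}` and `T₂ = conv{a, b, d}` are nondegenerate
triangles with `c` and `d` strictly on opposite sides of the line through `a` and `b`,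
then the segment joining the incenter of `T₁` to the incenter of `T₂` meets the open
segment between `a` and `b`. -/
theorem incenter_segment_crosses_shared_edge
    (a b c d : EuclideanSpace ℝ (Fin 2))
    (h1 : AffineIndependent ℝ ![a, b, c])
    (h2 : AffineIndependent ℝ ![a, b, d])
    (hopp : (affineSpan ℝ ({a, b} : Set (EuclideanSpace ℝ (Fin 2)))).SOppSide c d) :
    ∃ x, x ∈ segment ℝ (incenter a b c) (incenter a b d) ∧ x ∈ openSegment ℝ a b := by
  set s := affineSpan ℝ ({a, b} : Set (EuclideanSpace ℝ (Fin 2))) with hs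
  have hcs : c ∉ s := hopp.left_notMem
  have hds : d ∉ s := hopp.right_notMem
  have has : a ∈ s := left_mem_affineSpan_pair ℝ a b
  have hbs : b ∈ s := right_mem_affineSpan_pair ℝ a b
  have hab : a ≠ b := by
    intro h
    have := h1.injective (show ![a, b, c] 0 = ![a, b, c] 1 by simpa using h)
    simp at this
  obtain ⟨e, hes, hwbtw⟩ := AffineSubspace.wOppSide_iff_exists_wbtw.1 hopp.wOppSide
  have eseg : e ∈ segment ℝ c d := mem_segment_iff_wbtw.2 hwbtw
  obtain ⟨μ, lam, hμ0, hlam0, hμlam, he⟩ := eseg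
  have hμpos : 0 < μ := by
    rcases hμ0.lt_or_eq with h | h
    · exact h
    · exfalso
      have hlam1 : lam = 1 := by linarith
      have : d = e := by rw [← he, ← h]; simp [hlam1]
      exact hds (this ▸ hes)
  have hlampos : 0 < lam := by
    rcases hlam0.lt_or_eq with h | h
    · exact h
    · exfalso
      have hμ1 : μ = 1 := by linarith
      have : c = e := by rw [← he, ← h]; simp [hμ1]
      exact hcs (this ▸ hes)
  -- e on the line ab
  have hdir : e -ᵥ a ∈ vectorSpan ℝ ({a, b} : Set (EuclideanSpace ℝ (Fin 2))) := by
    rw [← direction_affineSpan]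
    exact AffineSubspace.vsub_mem_direction hes has
  obtain ⟨r, hr⟩ := mem_vectorSpan_pair_rev.1 hdir
  have hr' : r • (b - a) = e - a := by simpa using hr
  have he3 : e = (1 - r) • a + r • b := by
    have h4 : e = r • (b - a) + a := by rw [hr']; abel
    rw [h4]; module
  have he2 : μ • c + lam • d = (1 - r) • a + r • b := by rw [he, he3]
  -- positivity of the side lengths
  have hl : (0:ℝ) < ‖a - b‖ := norm_pos_iff.2 (sub_ne_zero.2 hab)
  have hla1 : (0:ℝ) < ‖b - c‖ := norm_pos_iff.2 (sub_ne_zero.2 fun h => hcs (h ▸ hbs))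
  have hlb1 : (0:ℝ) < ‖c - a‖ := norm_pos_iff.2 (sub_ne_zero.2 fun h => hcs (h.symm ▸ has))
  have hla2 : (0:ℝ) < ‖b - d‖ := norm_pos_iff.2 (sub_ne_zero.2 fun h => hds (h ▸ hbs))
  have hlb2 : (0:ℝ) < ‖d - a‖ := norm_pos_iff.2 (sub_ne_zero.2 fun h => hds (h.symm ▸ has))
  have hs1 : (0:ℝ) < ‖b - c‖ + ‖c - a‖ + ‖a - b‖ := by linarith
  have hs2 : (0:ℝ) < ‖b - d‖ + ‖d - a‖ + ‖a - b‖ := by linarith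
  have hD : (0:ℝ) < (‖b - d‖ + ‖d - a‖ + ‖a - b‖) * lam + (‖b - c‖ + ‖c - a‖ + ‖a - b‖) * μ :=
    add_pos (mul_pos hs2 hlampos) (mul_pos hs1 hμpos)
  set D : ℝ := (‖b - d‖ + ‖d - a‖ + ‖a - b‖) * lam + (‖b - c‖ + ‖c - a‖ + ‖a - b‖) * μ with hDdef
  -- strict inequalities
  have hrelb : e - b = μ • (c - b) + lam • (d - b) := by
    rw [← he]; match_scalars <;> linarith
  have hrela : e - a = μ • (c - a) + lam • (d - a) := by
    rw [← he]; match_scalars <;> linarith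
  have hineqb := aux_strict s b c d e hbs hes hcs hds μ lam hμpos hlampos hrelb
  have hineqa := aux_strict s a c d e has hes hcs hds μ lam hμpos hlampos hrela
  have heb : e - b = (1 - r) • (a - b) := by rw [he3]; module
  have hea : e - a = r • (b - a) := by rw [he3]; module
  have hnb : ‖e - b‖ = |1 - r| * ‖a - b‖ := by rw [heb, norm_smul, Real.norm_eq_abs]
  have hna : ‖e - a‖ = |r| * ‖a - b‖ := by
    rw [hea, norm_smul, Real.norm_eq_abs, norm_sub_rev]
  have hA : 0 < μ * ‖b - c‖ + lam * ‖b - d‖ + ‖a - b‖ * (1 - r) := by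
    have h2 : ‖c - b‖ = ‖b - c‖ := norm_sub_rev _ _
    have h3 : ‖d - b‖ = ‖b - d‖ := norm_sub_rev _ _
    have key := mul_le_mul_of_nonneg_left (neg_abs_le (1 - r)) (norm_nonneg (a - b))
    rw [h2, h3] at hineqb
    linarith [hineqb, key, hnb]
  have hB : 0 < μ * ‖c - a‖ + lam * ‖d - a‖ + ‖a - b‖ * r := by
    have key := mul_le_mul_of_nonneg_left (neg_abs_le r) (norm_nonneg (a - b))
    linarith [hineqa, key, hna]
  have hABD : (μ * ‖b - c‖ + lam * ‖b - d‖ + ‖a - b‖ * (1 - r)) +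
      (μ * ‖c - a‖ + lam * ‖d - a‖ + ‖a - b‖ * r) = D := by
    rw [hDdef]; linear_combination (-‖a - b‖) * hμlam
  set t : ℝ := (‖b - d‖ + ‖d - a‖ + ‖a - b‖) * lam / D with htdef
  refine ⟨((μ * ‖b - c‖ + lam * ‖b - d‖ + ‖a - b‖ * (1 - r)) / D) • a +
      ((μ * ‖c - a‖ + lam * ‖d - a‖ + ‖a - b‖ * r) / D) • b,
    ⟨1 - t, t, ?_, ?_, by ring, ?_⟩,
    ⟨(μ * ‖b - c‖ + lam * ‖b - d‖ + ‖a - b‖ * (1 - r)) / D,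
     (μ * ‖c - a‖ + lam * ‖d - a‖ + ‖a - b‖ * r) / D,
     div_pos hA hD, div_pos hB hD, ?_, rfl⟩⟩
  · rw [sub_nonneg, htdef]
    rw [div_le_one hD]
    have := mul_pos hs1 hμpos
    linarith
  · exact div_nonneg (by positivity) hD.le
  · rw [incenter, incenter, htdef, hDdef]
    exact key_alg a b c d ‖b - c‖ ‖c - a‖ ‖b - d‖ ‖d - a‖ ‖a - b‖ μ lam r
      hs1.ne' hs2.ne' hD.ne' he2
  · rw [← add_div, hABD, div_self hD.ne']
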